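/- The Gromov-Hausdorff monoid distance Υ is a metric up to isometric monoid isomorphism on the class of proper metric monoids: it is symmetric, bounded above by √2/2, satisfies the triangle inequality, and vanishes precisely when the two proper metric monoids are isometrically isomorphic as monoids. -/

import Mathlib

/-- A metric on a monoid is left invariant when left translations are isometric. -/
def LeftInvariant (G : Type*) [Monoid G] [MetricSpace G] : Prop :=
  ∀ h g g' : G, dist (h * g) (h * g') = dist g g'

/-- An `r`-local `ε`-almost isometric isomorphism between two metric monoids. -/
def AlmostIsoIso {G₁ G₂ : Type*} [Monoid G₁] [MetricSpace G₁]
    [Monoid G₂] [MetricSpace G₂] (ς₁ : G₁ → G₂) (ς₂ : G₂ → G₁) (ε r : ℝ) : Prop :=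
  ς₁ 1 = 1 ∧ ς₂ 1 = 1 ∧
  (∀ g ∈ Metric.closedBall (1 : G₁) r, ∀ g' ∈ Metric.closedBall (1 : G₁) r,
    ∀ h ∈ Metric.closedBall (1 : G₂) r,
      |dist (ς₁ g * ς₁ g') h - dist (g * g') (ς₂ h)| ≤ ε) ∧
  (∀ g ∈ Metric.closedBall (1 : G₂) r, ∀ g' ∈ Metric.closedBall (1 : G₂) r,
    ∀ h ∈ Metric.closedBall (1 : G₁) r,
      |dist (ς₂ g * ς₂ g') h - dist (g * g') (ς₁ h)| ≤ ε)

/-- The Gromov-Hausdorff monoid distance between two metric monoids. -/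
noncomputable def Upsilon (G H : Type*) [Monoid G] [MetricSpace G]
    [Monoid H] [MetricSpace H] : ℝ :=
  min (Real.sqrt 2 / 2)
    (sInf {ε : ℝ | 0 < ε ∧ ∃ ς : G → H, ∃ κ : H → G, AlmostIsoIso ς κ ε (1 / ε)})

open Filter Metric Topology

-- ## Auxiliary
def UpsSet (G H : Type*) [Monoid G] [MetricSpace G] [Monoid H] [MetricSpace H] : Set ℝ :=
  {ε : ℝ | 0 < ε ∧ ∃ ς : G → H, ∃ κ : H → G, AlmostIsoIso ς κ ε (1 / ε)}

lemma upsilon_def (G H : Type*) [Monoid G] [MetricSpace G] [Monoid H] [MetricSpace H] :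
    Upsilon G H = min (Real.sqrt 2 / 2) (sInf (UpsSet G H)) := rfl

section Basic
variable {G H : Type*} [Monoid G] [MetricSpace G] [Monoid H] [MetricSpace H]

lemma aii_symm {ς : G → H} {κ : H → G} {ε r : ℝ} (h : AlmostIsoIso ς κ ε r) :
    AlmostIsoIso κ ς ε r := ⟨h.2.1, h.1, h.2.2.2, h.2.2.1⟩

lemma upsSet_symm : UpsSet G H = UpsSet H G := by
  ext ε
  constructor <;> rintro ⟨hε, ς, κ, h⟩ <;> exact ⟨hε, κ, ς, aii_symm h⟩

lemma dist_mul_one_le (hinv : LeftInvariant G) (g g' : G) :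
    dist (g * g') 1 ≤ dist g 1 + dist g' 1 := by
  calc dist (g * g') 1 ≤ dist (g * g') (g * 1) + dist (g * 1) 1 := dist_triangle _ _ _
  _ = dist g' 1 + dist g 1 := by rw [hinv, mul_one]
  _ = dist g 1 + dist g' 1 := add_comm _ _

lemma two_mem (hinvG : LeftInvariant G) (hinvH : LeftInvariant H) : (2 : ℝ) ∈ UpsSet G H := by
  refine ⟨by norm_num, fun _ => 1, fun _ => 1, rfl, rfl, ?_, ?_⟩
  · intro g hg g' hg' h hh
    simp only [Metric.mem_closedBall] at hg hg' hh
    have h1 : dist (g * g') 1 ≤ 1 := by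
      have := dist_mul_one_le hinvG g g'; norm_num at hg hg'; linarith
    have h2 : dist (1 : H) h ≤ 1 := by rw [dist_comm]; norm_num at hh; linarith
    rw [one_mul, abs_le]
    constructor <;> nlinarith [dist_nonneg (x := (1:H)) (y := h), dist_nonneg (x := g*g') (y := (1:G))]
  · intro g hg g' hg' h hh
    simp only [Metric.mem_closedBall] at hg hg' hh
    have h1 : dist (g * g') 1 ≤ 1 := by
      have := dist_mul_one_le hinvH g g'; norm_num at hg hg'; linarith
    have h2 : dist (1 : G) h ≤ 1 := by rw [dist_comm]; norm_num at hh; linarith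
    rw [one_mul, abs_le]
    constructor <;> nlinarith [dist_nonneg (x := (1:G)) (y := h), dist_nonneg (x := g*g') (y := (1:H))]

lemma upsSet_bddBelow : BddBelow (UpsSet G H) := ⟨0, fun x hx => hx.1.le⟩

lemma upsilon_nonneg : 0 ≤ Upsilon G H := by
  rw [upsilon_def]
  exact le_min (by positivity) (Real.sInf_nonneg fun x hx => hx.1.le)

-- derived facts from an almost iso iso
variable {ς : G → H} {κ : H → G} {ε : ℝ}

lemma one_mem_ball (hε : 0 < ε) : (1 : G) ∈ Metric.closedBall (1 : G) (1/ε) := by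
  simp [le_of_lt (by positivity : (0:ℝ) < 1/ε), hε.le]

lemma aii_dist_one (hA : AlmostIsoIso ς κ ε (1/ε)) (hε : 0 < ε) {g : G}
    (hg : g ∈ Metric.closedBall (1 : G) (1/ε)) : |dist (ς g) 1 - dist g 1| ≤ ε := by
  have := hA.2.2.1 g hg 1 (one_mem_ball hε) 1 (one_mem_ball hε)
  simpa [hA.1, hA.2.1] using this

lemma aii_dist_pair (hA : AlmostIsoIso ς κ ε (1/ε)) (hε : 0 < ε) {g : G} {h : H}
    (hg : g ∈ Metric.closedBall (1 : G) (1/ε)) (hh : h ∈ Metric.closedBall (1 : H) (1/ε)) :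
    |dist (ς g) h - dist g (κ h)| ≤ ε := by
  simpa [hA.1] using hA.2.2.1 g hg 1 (one_mem_ball hε) h hh

lemma aii_inv_dist (hA : AlmostIsoIso ς κ ε (1/ε)) (hε : 0 < ε) {h : H} {b : G}
    (hh : h ∈ Metric.closedBall (1 : H) (1/ε)) (hb : b ∈ Metric.closedBall (1 : G) (1/ε)) :
    |dist (κ h) b - dist h (ς b)| ≤ ε := by
  simpa [hA.2.1] using hA.2.2.2 h hh 1 (one_mem_ball hε) b hb

lemma aii_comp_self (hA : AlmostIsoIso ς κ ε (1/ε)) (hε : 0 < ε) {g : G}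
    (hg : g ∈ Metric.closedBall (1 : G) (1/ε)) (hςg : ς g ∈ Metric.closedBall (1 : H) (1/ε)) :
    dist (κ (ς g)) g ≤ ε := by
  have := aii_inv_dist hA hε hςg hg
  simpa using this

lemma aii_dist_dist (hA : AlmostIsoIso ς κ ε (1/ε)) (hε : 0 < ε) {g g' : G}
    (hg : g ∈ Metric.closedBall (1 : G) (1/ε)) (hg' : g' ∈ Metric.closedBall (1 : G) (1/ε))
    (hςg' : ς g' ∈ Metric.closedBall (1 : H) (1/ε)) :
    |dist (ς g) (ς g') - dist g g'| ≤ 2 * ε := by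
  have h1 := aii_dist_pair hA hε hg hςg'
  have h2 := aii_comp_self hA hε hg' hςg'
  have h3 : |dist g (κ (ς g')) - dist g g'| ≤ dist (κ (ς g')) g' := by
    rw [dist_comm g (κ (ς g')), dist_comm g g']
    exact abs_dist_sub_le _ _ _
  have h4 := abs_sub_le (dist (ς g) (ς g')) (dist g (κ (ς g'))) (dist g g')
  linarith [h3.trans h2]

lemma aii_mul (hA : AlmostIsoIso ς κ ε (1/ε)) (hε : 0 < ε) {g g' : G}
    (hg : g ∈ Metric.closedBall (1 : G) (1/ε)) (hg' : g' ∈ Metric.closedBall (1 : G) (1/ε))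
    (hgg' : g * g' ∈ Metric.closedBall (1 : G) (1/ε))
    (hςgg' : ς (g * g') ∈ Metric.closedBall (1 : H) (1/ε)) :
    dist (ς g * ς g') (ς (g * g')) ≤ 2 * ε := by
  have h1 := hA.2.2.1 g hg g' hg' (ς (g * g')) hςgg'
  have h2 := aii_comp_self hA hε hgg' hςgg'
  rw [dist_comm] at h2
  have := abs_le.1 h1
  linarith [this.1, this.2]

end Basic

-- ## Composition (triangle inequality)
section Comp
variable {G₁ G₂ G₃ : Type*} [Monoid G₁] [MetricSpace G₁] [Monoid G₂] [MetricSpace G₂]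
  [Monoid G₃] [MetricSpace G₃]

lemma ball_arith {a b : ℝ} (ha : 0 < a) (hb : 0 < b) (hs : a + b ≤ 1) :
    1/(a+b) + a ≤ 1/b := by
  have hb' : b ≠ 0 := hb.ne'
  have hab : a + b ≠ 0 := by positivity
  have h1 : b*(a+b) ≤ 1 := by nlinarith
  have h2 : a ≤ a / (b*(a+b)) := by
    rw [le_div_iff₀ (by positivity)]
    nlinarith
  have h3 : a / (b*(a+b)) = 1/b - 1/(a+b) := by field_simp; ring
  linarith [h3 ▸ h2]

lemma comp_cond1 {ς₁ : G₁ → G₂} {κ₁ : G₂ → G₁} {ς₂ : G₂ → G₃} {κ₂ : G₃ → G₂} {ε₁ ε₂ : ℝ}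
    (h1 : 0 < ε₁) (h2 : 0 < ε₂) (hs : ε₁ + ε₂ ≤ 1)
    (hA₁ : AlmostIsoIso ς₁ κ₁ ε₁ (1/ε₁)) (hA₂ : AlmostIsoIso ς₂ κ₂ ε₂ (1/ε₂)) :
    ∀ g ∈ Metric.closedBall (1:G₁) (1/(ε₁+ε₂)), ∀ g' ∈ Metric.closedBall (1:G₁) (1/(ε₁+ε₂)),
    ∀ h ∈ Metric.closedBall (1:G₃) (1/(ε₁+ε₂)),
      |dist (ς₂ (ς₁ g) * ς₂ (ς₁ g')) h - dist (g*g') (κ₁ (κ₂ h))| ≤ ε₁ + ε₂ := by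
  intro g hg g' hg' h hh
  have hr1 : 1/(ε₁+ε₂) ≤ 1/ε₁ := one_div_le_one_div_of_le h1 (by linarith)
  have hr2 : 1/(ε₁+ε₂) ≤ 1/ε₂ := one_div_le_one_div_of_le h2 (by linarith)
  have hg1 : g ∈ Metric.closedBall (1:G₁) (1/ε₁) := Metric.closedBall_subset_closedBall hr1 hg
  have hg'1 : g' ∈ Metric.closedBall (1:G₁) (1/ε₁) := Metric.closedBall_subset_closedBall hr1 hg'
  have hh2 : h ∈ Metric.closedBall (1:G₃) (1/ε₂) := Metric.closedBall_subset_closedBall hr2 hh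
  have hmem : ∀ x : G₁, x ∈ Metric.closedBall (1:G₁) (1/(ε₁+ε₂)) →
      ς₁ x ∈ Metric.closedBall (1:G₂) (1/ε₂) := by
    intro x hx
    have hb := abs_le.1 (aii_dist_one hA₁ h1 (Metric.closedBall_subset_closedBall hr1 hx))
    have hx' := Metric.mem_closedBall.1 hx
    have key := ball_arith h1 h2 hs
    rw [Metric.mem_closedBall]
    linarith [hb.2]
  have hκh : κ₂ h ∈ Metric.closedBall (1:G₂) (1/ε₁) := by
    have hb := abs_le.1 (aii_dist_one (aii_symm hA₂) h2 hh2)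
    have key : 1/(ε₁+ε₂) + ε₂ ≤ 1/ε₁ := by
      have := ball_arith h2 h1 (by linarith)
      rwa [add_comm ε₂ ε₁] at this
    rw [Metric.mem_closedBall] at hh ⊢
    linarith [hb.2]
  have t1 := hA₂.2.2.1 (ς₁ g) (hmem g hg) (ς₁ g') (hmem g' hg') h hh2
  have t2 := hA₁.2.2.1 g hg1 g' hg'1 (κ₂ h) hκh
  calc |dist (ς₂ (ς₁ g) * ς₂ (ς₁ g')) h - dist (g*g') (κ₁ (κ₂ h))|
      ≤ |dist (ς₂ (ς₁ g) * ς₂ (ς₁ g')) h - dist (ς₁ g * ς₁ g') (κ₂ h)|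
        + |dist (ς₁ g * ς₁ g') (κ₂ h) - dist (g*g') (κ₁ (κ₂ h))| := abs_sub_le _ _ _
    _ ≤ ε₂ + ε₁ := add_le_add t1 t2
    _ = ε₁ + ε₂ := add_comm _ _

lemma comp_mem {ε₁ ε₂ : ℝ} (he₁ : ε₁ ∈ UpsSet G₁ G₂) (he₂ : ε₂ ∈ UpsSet G₂ G₃)
    (hs : ε₁ + ε₂ ≤ 1) : ε₁ + ε₂ ∈ UpsSet G₁ G₃ := by
  obtain ⟨h1, ς₁, κ₁, hA₁⟩ := he₁
  obtain ⟨h2, ς₂, κ₂, hA₂⟩ := he₂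
  refine ⟨by linarith, fun g => ς₂ (ς₁ g), fun h => κ₁ (κ₂ h), ?_, ?_, ?_, ?_⟩
  · show ς₂ (ς₁ 1) = 1
    rw [hA₁.1, hA₂.1]
  · show κ₁ (κ₂ 1) = 1
    rw [hA₂.2.1, hA₁.2.1]
  · exact comp_cond1 h1 h2 hs hA₁ hA₂
  · have key := comp_cond1 h2 h1 (by linarith) (aii_symm hA₂) (aii_symm hA₁)
    intro g hg g' hg' h hh
    have hcomm : ε₂ + ε₁ = ε₁ + ε₂ := add_comm _ _
    rw [← hcomm] at hg hg' hh ⊢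
    exact key g hg g' hg' h hh

end Comp

-- ## Zero from isomorphism
section ZeroOfIso
variable {G H : Type*} [Monoid G] [MetricSpace G] [Monoid H] [MetricSpace H]

lemma mem_upsSet_of_iso (e : G ≃* H) (he : Isometry e) {ε : ℝ} (hε : 0 < ε) :
    ε ∈ UpsSet G H := by
  refine ⟨hε, e, e.symm, map_one e, map_one e.symm, ?_, ?_⟩
  · intro g _ g' _ h _
    have : dist (e g * e g') h = dist (g*g') (e.symm h) := by
      rw [← map_mul, ← he.dist_eq (g*g') (e.symm h), e.apply_symm_apply]
    simp [this, hε.le]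
  · intro g _ g' _ h _
    have : dist (e.symm g * e.symm g') h = dist (g*g') (e h) := by
      rw [← map_mul]
      calc dist (e.symm (g*g')) h = dist (e (e.symm (g*g'))) (e h) := (he.dist_eq _ _).symm
        _ = dist (g*g') (e h) := by rw [e.apply_symm_apply]
    simp [this, hε.le]

lemma upsilon_zero_of_iso (e : G ≃* H) (he : Isometry e) : Upsilon G H = 0 := by
  have h0 : sInf (UpsSet G H) ≤ 0 := by
    refine le_of_forall_pos_le_add ?_
    intro η hη
    have := csInf_le upsSet_bddBelow (mem_upsSet_of_iso e he hη)
    linarith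
  have h0' : 0 ≤ sInf (UpsSet G H) := Real.sInf_nonneg fun x hx => hx.1.le
  rw [upsilon_def, le_antisymm h0 h0', min_eq_right (by positivity)]

end ZeroOfIso

-- ## Limit construction
lemma ulim_exists {α : Type*} [MetricSpace α] [ProperSpace α] (U : Ultrafilter ℕ) (u : ℕ → α)
    (c : α) (R : ℝ) (h : ∀ᶠ n in (U : Filter ℕ), u n ∈ Metric.closedBall c R) :
    ∃ a, Tendsto u (U : Filter ℕ) (𝓝 a) := by
  obtain ⟨a, -, ha⟩ := (isCompact_closedBall c R).ultrafilter_le_nhds (U.map u)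
    (by rw [Ultrafilter.coe_map, le_principal_iff, mem_map]; exact h)
  exact ⟨a, by rwa [Ultrafilter.coe_map] at ha⟩

section Main
variable {G H : Type*} [Monoid G] [MetricSpace G] [ProperSpace G]
  [Monoid H] [MetricSpace H] [ProperSpace H]

lemma exists_iso (hcontH : Continuous fun p : H × H => p.1 * p.2)
    (ε : ℕ → ℝ) (ς : ℕ → G → H) (κ : ℕ → H → G)
    (hε : ∀ n, 0 < ε n) (hεn : ∀ n, ε n < 1/((n:ℝ)+1))
    (hA : ∀ n, AlmostIsoIso (ς n) (κ n) (ε n) (1/(ε n))) :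
    ∃ e : G ≃* H, Isometry e := by
  have : Nonempty G := ⟨1⟩
  have : Nonempty H := ⟨1⟩
  set U := Ultrafilter.of (atTop : Filter ℕ) with hUdef
  have hU : (U : Filter ℕ) ≤ atTop := Ultrafilter.of_le _
  have hε1 : ∀ n, ε n ≤ 1 := fun n => by
    have h1 := hεn n
    have h2 : 1/((n:ℝ)+1) ≤ 1 := by
      rw [div_le_one (by positivity)]; linarith [Nat.cast_nonneg (α := ℝ) n]
    linarith
  have hε0 : Tendsto ε atTop (𝓝 0) :=
    squeeze_zero (fun n => (hε n).le) (fun n => (hεn n).le)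
      tendsto_one_div_add_atTop_nhds_zero_nat
  have hε0U : Tendsto ε (U : Filter ℕ) (𝓝 0) := hε0.mono_left hU
  have hbig : ∀ x : ℝ, ∀ᶠ n in atTop, x + 1 ≤ 1/(ε n) := by
    intro x
    filter_upwards [eventually_ge_atTop ⌈x⌉₊] with n hn
    have hx : x ≤ (n:ℝ) := le_trans (Nat.le_ceil x) (by exact_mod_cast hn)
    have h1 : ε n * ((n:ℝ)+1) < 1 := by
      have h3 := (lt_div_iff₀ (show (0:ℝ) < (n:ℝ)+1 by positivity)).1 (hεn n)
      linarith
    have h2 : (n:ℝ)+1 ≤ 1/(ε n) := by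
      rw [le_div_iff₀ (hε n)]
      nlinarith
    linarith
  have hmemG : ∀ x : G, ∀ᶠ n in atTop, x ∈ Metric.closedBall (1:G) (1/(ε n)) := by
    intro x
    filter_upwards [hbig (dist x 1)] with n hn
    rw [Metric.mem_closedBall]; linarith
  have hmemH : ∀ x : H, ∀ᶠ n in atTop, x ∈ Metric.closedBall (1:H) (1/(ε n)) := by
    intro x
    filter_upwards [hbig (dist x 1)] with n hn
    rw [Metric.mem_closedBall]; linarith
  have hςmem : ∀ x : G, ∀ᶠ n in atTop,
      ς n x ∈ Metric.closedBall (1:H) (1/(ε n)) ∧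
      ς n x ∈ Metric.closedBall (1:H) (dist x 1 + 1) := by
    intro x
    filter_upwards [hbig (dist x 1), hmemG x] with n hn hx
    have hb := abs_le.1 (aii_dist_one (hA n) (hε n) hx)
    constructor <;> rw [Metric.mem_closedBall] <;> linarith [hε1 n]
  have hκmem : ∀ x : H, ∀ᶠ n in atTop,
      κ n x ∈ Metric.closedBall (1:G) (1/(ε n)) ∧
      κ n x ∈ Metric.closedBall (1:G) (dist x 1 + 1) := by
    intro x
    filter_upwards [hbig (dist x 1), hmemH x] with n hn hx
    have hb := abs_le.1 (aii_dist_one (aii_symm (hA n)) (hε n) hx)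
    constructor <;> rw [Metric.mem_closedBall] <;> linarith [hε1 n]
  have hΦex : ∀ g : G, ∃ a : H, Tendsto (fun n => ς n g) (U : Filter ℕ) (𝓝 a) := fun g =>
    ulim_exists U _ 1 (dist g 1 + 1) (hU ((hςmem g).mono fun n h => h.2))
  set Φ : G → H := fun g => limUnder (U : Filter ℕ) (fun n => ς n g) with hΦdef
  have hΦ : ∀ g, Tendsto (fun n => ς n g) (U : Filter ℕ) (𝓝 (Φ g)) := fun g =>
    tendsto_nhds_limUnder (hΦex g)
  have hΨex : ∀ h : H, ∃ a : G, Tendsto (fun n => κ n h) (U : Filter ℕ) (𝓝 a) := fun h =>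
    ulim_exists U _ 1 (dist h 1 + 1) (hU ((hκmem h).mono fun n h' => h'.2))
  set Ψ : H → G := fun h => limUnder (U : Filter ℕ) (fun n => κ n h) with hΨdef
  have hΨ : ∀ h, Tendsto (fun n => κ n h) (U : Filter ℕ) (𝓝 (Ψ h)) := fun h =>
    tendsto_nhds_limUnder (hΨex h)
  have hdist : ∀ g g' : G, dist (Φ g) (Φ g') = dist g g' := by
    intro g g'
    have ev : ∀ᶠ n in (U : Filter ℕ), |dist (ς n g) (ς n g') - dist g g'| ≤ 2 * ε n := by
      refine hU ?_
      filter_upwards [hmemG g, hmemG g', hςmem g'] with n h1 h2 h3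
      exact aii_dist_dist (hA n) (hε n) h1 h2 h3.1
    have t1 : Tendsto (fun n => dist (ς n g) (ς n g')) (U : Filter ℕ) (𝓝 (dist (Φ g) (Φ g'))) :=
      (hΦ g).dist (hΦ g')
    have t0 : Tendsto (fun n => dist (ς n g) (ς n g') - dist g g') (U : Filter ℕ) (𝓝 0) := by
      apply squeeze_zero_norm' (a := fun n => 2 * ε n)
      · simpa [Real.norm_eq_abs] using ev
      · simpa using hε0U.const_mul 2
    have t2 : Tendsto (fun n => dist (ς n g) (ς n g')) (U : Filter ℕ) (𝓝 (dist g g')) := by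
      have := t0.add_const (dist g g')
      simpa using this
    exact tendsto_nhds_unique t1 t2
  have hmul : ∀ g g' : G, Φ (g * g') = Φ g * Φ g' := by
    intro g g'
    have ev : ∀ᶠ n in (U : Filter ℕ), dist (ς n g * ς n g') (ς n (g*g')) ≤ 2 * ε n := by
      refine hU ?_
      filter_upwards [hmemG g, hmemG g', hmemG (g*g'), hςmem (g*g')] with n h1 h2 h3 h4
      exact aii_mul (hA n) (hε n) h1 h2 h3 h4.1
    have t1 : Tendsto (fun n => ς n g * ς n g') (U : Filter ℕ) (𝓝 (Φ g * Φ g')) :=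
      (hcontH.tendsto (Φ g, Φ g')).comp ((hΦ g).prodMk_nhds (hΦ g'))
    have t2 := hΦ (g*g')
    have td : Tendsto (fun n => dist (ς n g * ς n g') (ς n (g*g'))) (U : Filter ℕ)
        (𝓝 (dist (Φ g * Φ g') (Φ (g*g')))) := t1.dist t2
    have hle : dist (Φ g * Φ g') (Φ (g*g')) ≤ 0 := by
      refine le_of_tendsto_of_tendsto td ?_ ev
      simpa using hε0U.const_mul 2
    exact (dist_le_zero.1 hle).symm
  have hli : ∀ g : G, Ψ (Φ g) = g := by
    intro g
    have ev : ∀ᶠ n in (U : Filter ℕ), dist (κ n (Φ g)) g ≤ dist (Φ g) (ς n g) + ε n := by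
      refine hU ?_
      filter_upwards [hmemH (Φ g), hmemG g] with n h1 h2
      have hb := abs_le.1 (aii_inv_dist (hA n) (hε n) h1 h2)
      linarith [hb.2]
    have t0 : Tendsto (fun n => dist (Φ g) (ς n g) + ε n) (U : Filter ℕ) (𝓝 0) := by
      have h1 : Tendsto (fun n => dist (Φ g) (ς n g)) (U : Filter ℕ) (𝓝 0) := by
        have := (tendsto_const_nhds (x := Φ g) (f := (U : Filter ℕ))).dist (hΦ g)
        simpa using this
      simpa using h1.add hε0U
    have t1 : Tendsto (fun n => κ n (Φ g)) (U : Filter ℕ) (𝓝 g) := by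
      rw [tendsto_iff_dist_tendsto_zero]
      exact squeeze_zero' (Eventually.of_forall fun n => dist_nonneg) ev t0
    exact tendsto_nhds_unique (hΨ (Φ g)) t1
  have hri : ∀ h : H, Φ (Ψ h) = h := by
    intro h
    have ev : ∀ᶠ n in (U : Filter ℕ), dist (ς n (Ψ h)) h ≤ dist (Ψ h) (κ n h) + ε n := by
      refine hU ?_
      filter_upwards [hmemG (Ψ h), hmemH h] with n h1 h2
      have hb := abs_le.1 (aii_dist_pair (hA n) (hε n) h1 h2)
      linarith [hb.2]
    have t0 : Tendsto (fun n => dist (Ψ h) (κ n h) + ε n) (U : Filter ℕ) (𝓝 0) := by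
      have h1 : Tendsto (fun n => dist (Ψ h) (κ n h)) (U : Filter ℕ) (𝓝 0) := by
        have := (tendsto_const_nhds (x := Ψ h) (f := (U : Filter ℕ))).dist (hΨ h)
        simpa using this
      simpa using h1.add hε0U
    have t1 : Tendsto (fun n => ς n (Ψ h)) (U : Filter ℕ) (𝓝 h) := by
      rw [tendsto_iff_dist_tendsto_zero]
      exact squeeze_zero' (Eventually.of_forall fun n => dist_nonneg) ev t0
    exact tendsto_nhds_unique (hΦ (Ψ h)) t1
  exact ⟨{ toFun := Φ, invFun := Ψ, left_inv := hli, right_inv := hri, map_mul' := hmul },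
    Isometry.of_dist_eq hdist⟩

end Main

theorem upsilon_metric {G₁ G₂ G₃ : Type*}
    [Monoid G₁] [MetricSpace G₁] [ProperSpace G₁]
    [Monoid G₂] [MetricSpace G₂] [ProperSpace G₂]
    [Monoid G₃] [MetricSpace G₃] [ProperSpace G₃]
    (hinv₁ : LeftInvariant G₁) (hinv₂ : LeftInvariant G₂) (hinv₃ : LeftInvariant G₃)
    (hcont₁ : Continuous fun p : G₁ × G₁ => p.1 * p.2)
    (hcont₂ : Continuous fun p : G₂ × G₂ => p.1 * p.2)
    (hcont₃ : Continuous fun p : G₃ × G₃ => p.1 * p.2) :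
    Upsilon G₁ G₂ ≤ Real.sqrt 2 / 2 ∧
    Upsilon G₁ G₂ = Upsilon G₂ G₁ ∧
    Upsilon G₁ G₃ ≤ Upsilon G₁ G₂ + Upsilon G₂ G₃ ∧
    (Upsilon G₁ G₂ = 0 ↔ ∃ ς : G₁ ≃* G₂, Isometry ς) := by
  have hsqrt2 : Real.sqrt 2 < 2 := by
    nlinarith [Real.sq_sqrt (show (0:ℝ) ≤ 2 by norm_num), Real.sqrt_nonneg 2]
  have hsqrtpos : 0 < Real.sqrt 2 / 2 := by positivity
  refine ⟨min_le_left _ _, ?_, ?_, ?_⟩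
  · rw [upsilon_def, upsilon_def, upsSet_symm]
  · -- triangle inequality
    rcases le_or_gt (Real.sqrt 2 / 2) (Upsilon G₁ G₂ + Upsilon G₂ G₃) with hle | hlt
    · exact le_trans (min_le_left _ _) hle
    · have hA0 : 0 ≤ Upsilon G₁ G₂ := upsilon_nonneg
      have hB0 : 0 ≤ Upsilon G₂ G₃ := upsilon_nonneg
      have hA : Upsilon G₁ G₂ < Real.sqrt 2 / 2 := by linarith
      have hB : Upsilon G₂ G₃ < Real.sqrt 2 / 2 := by linarith
      have hAeq : Upsilon G₁ G₂ = sInf (UpsSet G₁ G₂) := by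
        rw [upsilon_def] at hA ⊢
        rcases min_cases (Real.sqrt 2 / 2) (sInf (UpsSet G₁ G₂)) with ⟨h, _⟩ | ⟨h, _⟩
        · rw [h] at hA; exact absurd hA (lt_irrefl _)
        · exact h
      have hBeq : Upsilon G₂ G₃ = sInf (UpsSet G₂ G₃) := by
        rw [upsilon_def] at hB ⊢
        rcases min_cases (Real.sqrt 2 / 2) (sInf (UpsSet G₂ G₃)) with ⟨h, _⟩ | ⟨h, _⟩
        · rw [h] at hB; exact absurd hB (lt_irrefl _)
        · exact h
      rw [upsilon_def (G := G₁) (H := G₃)]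
      refine le_trans (min_le_right _ _) ?_
      refine le_of_forall_pos_le_add ?_
      intro η hη
      set η' := min η (Real.sqrt 2 / 2 - (Upsilon G₁ G₂ + Upsilon G₂ G₃)) with hη'def
      have hη'pos : 0 < η' := lt_min hη (by linarith)
      obtain ⟨ε₁, hε₁S, hε₁lt⟩ := exists_lt_of_csInf_lt ⟨2, two_mem hinv₁ hinv₂⟩
        (show sInf (UpsSet G₁ G₂) < Upsilon G₁ G₂ + η'/2 by rw [← hAeq]; linarith)
      obtain ⟨ε₂, hε₂S, hε₂lt⟩ := exists_lt_of_csInf_lt ⟨2, two_mem hinv₂ hinv₃⟩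
        (show sInf (UpsSet G₂ G₃) < Upsilon G₂ G₃ + η'/2 by rw [← hBeq]; linarith)
      have hη'le2 : η' ≤ Real.sqrt 2 / 2 - (Upsilon G₁ G₂ + Upsilon G₂ G₃) := min_le_right _ _
      have hsum : ε₁ + ε₂ ≤ 1 := by linarith
      have hmem := comp_mem hε₁S hε₂S hsum
      have hfin := csInf_le upsSet_bddBelow hmem
      have hη'le : η' ≤ η := min_le_left _ _
      linarith
  · constructor
    · intro h0
      have hle : sInf (UpsSet G₁ G₂) ≤ 0 := by
        by_contra hb
        push_neg at hb
        have hlt := lt_min hsqrtpos hb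
        rw [upsilon_def] at h0
        rw [h0] at hlt
        exact lt_irrefl 0 hlt
      have hge : 0 ≤ sInf (UpsSet G₁ G₂) := Real.sInf_nonneg fun x hx => hx.1.le
      have heq : sInf (UpsSet G₁ G₂) = 0 := le_antisymm hle hge
      have hex : ∀ n : ℕ, ∃ x ∈ UpsSet G₁ G₂, x < 1/((n:ℝ)+1) := fun n =>
        exists_lt_of_csInf_lt ⟨2, two_mem hinv₁ hinv₂⟩
          (by rw [heq]; positivity)
      choose ε hεS hεlt using hex
      have hεS' : ∀ n, 0 < ε n ∧ ∃ ς : G₁ → G₂, ∃ κ : G₂ → G₁,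
          AlmostIsoIso ς κ (ε n) (1 / ε n) := fun n => hεS n
      choose hpos ς κ hA using hεS'
      exact exists_iso hcont₂ ε ς κ hpos hεlt hA
    · rintro ⟨e, he⟩
      exact upsilon_zero_of_iso e he
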